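/- Let h ∈ (1,2), A > 0 and B > 0. Define C_h(s,t) = s^h + t^h − (1/2)[(s+t)^h + |s−t|^h], c_h(s,t) = (s+t)^h − s^h − t^h, and e(s,t) = A·C_h(s,t) + B·c_h(s,t). Fix 0 ≤ u < v ≤ s < t and define R(τ) = e(v, t+τ) − e(v, s+τ) − e(u, t+τ) + e(u, s+τ) for τ > 0. Then lim_{τ→∞} τ^{2−h} R(τ) = B · h(h−1)(v−u)(t−s); in particular R(τ) decays at the polynomial rate τ^{h−2}. -/

import Mathlib

open Filter

/-- Covariance of the sub-fractional Brownian motion. -/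
noncomputable def subCov (h s t : ℝ) : ℝ :=
  s ^ h + t ^ h - (1/2) * ((s + t) ^ h + |s - t| ^ h)

/-- The second covariance kernel `c_h` (for `h > 1`, without the sign). -/
noncomputable def cCov (h s t : ℝ) : ℝ := (s + t) ^ h - s ^ h - t ^ h

/-- Covariance of the limit Gaussian process. -/
noncomputable def eCov (h A B s t : ℝ) : ℝ := A * subCov h s t + B * cCov h s t

private lemma pos_aux (a x M : ℝ) (hM : |a| < M) (hx : 0 < x) (hxM : x < 1/M) :
    0 < 1 + a * x := by
  have hM0 : 0 < M := lt_of_le_of_lt (abs_nonneg a) hM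
  have h1 : x * M < 1 := by
    have := (lt_div_iff₀ hM0).mp hxM
    linarith
  have h2 : |a| * x < M * x := by
    rcases eq_or_lt_of_le (abs_nonneg a) with h | h
    · nlinarith
    · exact mul_lt_mul_of_pos_right hM hx
  have h3 : -(|a| * x) ≤ a * x := by nlinarith [neg_abs_le a]
  nlinarith

private lemma deriv_term (a h x : ℝ) (hx : 1 + a * x ≠ 0) :
    HasDerivAt (fun y : ℝ => (1 + a * y) ^ h) (a * h * (1 + a * x) ^ (h - 1)) x := by
  have h1 : HasDerivAt (fun y : ℝ => 1 + a * y) a x := by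
    simpa using ((hasDerivAt_id x).const_mul a).const_add 1
  exact h1.rpow_const (Or.inl hx)

/-- key limit as x → 0⁺ -/
private lemma keyA (h a b c d : ℝ) (hsum : a + d = b + c) :
    Tendsto (fun x : ℝ =>
      ((1+a*x)^h - (1+b*x)^h - (1+c*x)^h + (1+d*x)^h) / x^2)
      (nhdsWithin 0 (Set.Ioi 0))
      (nhds (h*(h-1)*(a^2+d^2-b^2-c^2)/2)) := by
  set ψ : ℝ → ℝ := fun x =>
    a*h*(1+a*x)^(h-1) - b*h*(1+b*x)^(h-1) - c*h*(1+c*x)^(h-1) + d*h*(1+d*x)^(h-1) with hψ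
  set M : ℝ := |a| + |b| + |c| + |d| + 1 with hMdef
  have hM0 : 0 < M := by positivity
  have habs : |a| < M ∧ |b| < M ∧ |c| < M ∧ |d| < M := by
    refine ⟨?_, ?_, ?_, ?_⟩ <;> · simp only [hMdef]; nlinarith [abs_nonneg a, abs_nonneg b, abs_nonneg c, abs_nonneg d]
  have hmem : ∀ᶠ x in nhdsWithin (0:ℝ) (Set.Ioi 0), x ∈ Set.Ioo (0:ℝ) (1/M) :=
    Ioo_mem_nhdsGT_of_mem ⟨le_refl 0, by positivity⟩
  have hposall : ∀ᶠ x in nhdsWithin (0:ℝ) (Set.Ioi 0),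
      0 < 1 + a*x ∧ 0 < 1 + b*x ∧ 0 < 1 + c*x ∧ 0 < 1 + d*x := by
    filter_upwards [hmem] with x hx
    exact ⟨pos_aux a x M habs.1 hx.1 hx.2, pos_aux b x M habs.2.1 hx.1 hx.2,
      pos_aux c x M habs.2.2.1 hx.1 hx.2, pos_aux d x M habs.2.2.2 hx.1 hx.2⟩
  apply HasDerivAt.lhopital_zero_nhdsGT (f' := ψ) (g' := fun x => 2*x)
  · filter_upwards [hposall] with x hx
    have := (((deriv_term a h x hx.1.ne').sub (deriv_term b h x hx.2.1.ne')).sub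
      (deriv_term c h x hx.2.2.1.ne')).add (deriv_term d h x hx.2.2.2.ne')
    exact this
  · filter_upwards with x
    simpa using hasDerivAt_pow 2 x
  · filter_upwards [hmem] with x hx
    have := hx.1; positivity
  · have hc : ContinuousAt (fun x : ℝ =>
        (1+a*x)^h - (1+b*x)^h - (1+c*x)^h + (1+d*x)^h) 0 := by
      have : ∀ e : ℝ, ContinuousAt (fun x : ℝ => (1+e*x)^h) 0 := by
        intro e
        apply ContinuousAt.rpow_const
        · fun_prop
        · left; norm_num
      exact (((this a).sub (this b)).sub (this c)).add (this d)
    have h0 : ((1+a*(0:ℝ))^h - (1+b*0)^h - (1+c*0)^h + (1+d*0)^h) = 0 := by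
      simp [Real.one_rpow]
    simpa [h0] using (hc.continuousWithinAt (s := Set.Ioi (0:ℝ))).tendsto
  · have : Tendsto (fun x : ℝ => x^2) (nhdsWithin 0 (Set.Ioi 0)) (nhds 0) := by
      have := (continuous_pow 2).tendsto (0:ℝ)
      simpa using this.mono_left nhdsWithin_le_nhds
    exact this
  · -- ψ x / (2x) → h(h-1)(a²+d²-b²-c²)/2
    set D : ℝ := h*(h-1)*(a^2+d^2-b^2-c^2) with hD
    have hψ0 : ψ 0 = 0 := by
      simp only [hψ, mul_zero, add_zero, Real.one_rpow]
      linear_combination h * hsum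
    have hder : HasDerivAt ψ D 0 := by
      have H : ∀ e : ℝ, HasDerivAt (fun x : ℝ => e*h*(1+e*x)^(h-1))
          (e*h*(e*(h-1)*(1+e*(0:ℝ))^(h-1-1))) 0 := by
        intro e
        exact (deriv_term e (h-1) 0 (by norm_num)).const_mul (e*h)
      have : HasDerivAt ψ _ 0 := (((H a).sub (H b)).sub (H c)).add (H d)
      convert this using 1
      simp [Real.one_rpow, hD]; ring
    have hslope := hasDerivAt_iff_tendsto_slope.mp hder
    have hslope' : Tendsto (slope ψ 0) (nhdsWithin 0 (Set.Ioi 0)) (nhds D) :=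
      hslope.mono_left (nhdsWithin_mono 0 (fun x hx => ne_of_gt hx))
    have := hslope'.div_const 2
    apply this.congr'
    filter_upwards [hmem] with x hx
    have hx0 : x ≠ 0 := ne_of_gt hx.1
    have hs : slope ψ 0 x = ψ x / x := by
      rw [slope_def_field, hψ0, sub_zero, sub_zero]
    rw [hs, div_div, mul_comm x 2]

/-- key limit as τ → ∞ -/
private lemma lemB (h a b c d : ℝ) (hsum : a + d = b + c) :
    Tendsto (fun τ : ℝ => τ^(2-h) * ((τ+a)^h - (τ+b)^h - (τ+c)^h + (τ+d)^h))
      atTop (nhds (h*(h-1)*(a^2+d^2-b^2-c^2)/2)) := by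
  have hcomp : Tendsto (fun τ : ℝ => 1/τ) atTop (nhdsWithin 0 (Set.Ioi 0)) := by
    apply tendsto_nhdsWithin_of_tendsto_nhds_of_eventually_within
    · simpa [one_div] using tendsto_inv_atTop_zero
    · filter_upwards [eventually_gt_atTop (0:ℝ)] with τ hτ
      exact Set.mem_Ioi.mpr (by positivity)
  have := (keyA h a b c d hsum).comp hcomp
  apply this.congr'
  set M : ℝ := |a| + |b| + |c| + |d| + 1 with hMdef
  filter_upwards [eventually_gt_atTop M] with τ hτ
  have hM0 : 0 < M := by positivity
  have hτ0 : 0 < τ := lt_trans hM0 hτ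
  have hbase : ∀ e : ℝ, |e| < M → 0 < τ + e := by
    intro e he
    nlinarith [neg_abs_le e]
  have habs : |a| < M ∧ |b| < M ∧ |c| < M ∧ |d| < M := by
    refine ⟨?_, ?_, ?_, ?_⟩ <;> · simp only [hMdef]; nlinarith [abs_nonneg a, abs_nonneg b, abs_nonneg c, abs_nonneg d]
  have ha' := hbase a habs.1
  have hb' := hbase b habs.2.1
  have hc' := hbase c habs.2.2.1
  have hd' := hbase d habs.2.2.2
  have hrw : ∀ e : ℝ, 0 < τ + e → (1 + e * (1/τ))^h = (τ+e)^h / τ^h := by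
    intro e he
    rw [show (1 + e * (1/τ)) = (τ+e)/τ by field_simp, Real.div_rpow he.le hτ0.le]
  have hτh : (0:ℝ) < τ^h := Real.rpow_pos_of_pos hτ0 h
  have key : τ^(2-h) * τ^h = τ^2 := by
    rw [← Real.rpow_natCast τ 2, ← Real.rpow_add hτ0]
    norm_num
  simp only [Function.comp]
  rw [hrw a ha', hrw b hb', hrw c hc', hrw d hd']
  rw [div_sub_div_same, div_sub_div_same, ← add_div]
  field_simp
  linear_combination (-((τ+a)^h - (τ+b)^h - (τ+c)^h + (τ+d)^h)) * key

theorem stmt2 (h A B : ℝ) (hh : h ∈ Set.Ioo (1:ℝ) 2) (hA : 0 < A) (hB : 0 < B)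
    (u v s t : ℝ) (hu : 0 ≤ u) (huv : u < v) (hvs : v ≤ s) (hst : s < t) :
    Tendsto (fun τ : ℝ => τ ^ (2 - h) *
        (eCov h A B v (t + τ) - eCov h A B v (s + τ)
          - eCov h A B u (t + τ) + eCov h A B u (s + τ)))
      atTop (nhds (B * (h * (h - 1) * (v - u) * (t - s)))) := by
  have T1 := lemB h (v+t) (v+s) (u+t) (u+s) (by ring)
  have T2 := lemB h (t-v) (s-v) (t-u) (s-u) (by ring)
  have comb := ((T1.const_mul (B - A/2)).sub (T2.const_mul (A/2)))
  have hval : (B - A/2) * (h*(h-1)*((v+t)^2+(u+s)^2-(v+s)^2-(u+t)^2)/2)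
      - (A/2) * (h*(h-1)*((t-v)^2+(s-u)^2-(s-v)^2-(t-u)^2)/2)
      = B * (h * (h - 1) * (v - u) * (t - s)) := by ring
  rw [hval] at comb
  apply comb.congr'
  filter_upwards [eventually_ge_atTop (0:ℝ)] with τ hτ
  have g1 : |v - (t + τ)| = τ + (t - v) := by
    rw [abs_of_nonpos (by linarith)]; ring
  have g2 : |v - (s + τ)| = τ + (s - v) := by
    rw [abs_of_nonpos (by linarith)]; ring
  have g3 : |u - (t + τ)| = τ + (t - u) := by
    rw [abs_of_nonpos (by linarith)]; ring
  have g4 : |u - (s + τ)| = τ + (s - u) := by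
    rw [abs_of_nonpos (by linarith)]; ring
  simp only [eCov, subCov, cCov, g1, g2, g3, g4]
  rw [show v + (t + τ) = τ + (v+t) by ring, show v + (s + τ) = τ + (v+s) by ring,
      show u + (t + τ) = τ + (u+t) by ring, show u + (s + τ) = τ + (u+s) by ring]
  ring
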